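/- Let n ∈ ℤ with |n| ≥ 2, let p be a prime number, and let 𝔓 be a non-empty set of primes. If |n^{p²} − 1| ∈ Ξ(n,𝔓), then p ∈ 𝔓. -/
import Mathlib


/-- The Baumslag–Solitar relations for `BS(m,n)`: one relation `t⁻¹ aᵐ t a⁻ⁿ`. -/
def BSrels (m n : ℤ) : Set (FreeGroup Bool) :=
  {(FreeGroup.of true)⁻¹ * (FreeGroup.of false) ^ m * FreeGroup.of true *
    (FreeGroup.of false) ^ (-n)}

/-- The Baumslag–Solitar group `BS(m,n) = ⟨a, t ∣ t⁻¹ aᵐ t = aⁿ⟩`. -/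
def BS (m n : ℤ) : Type := PresentedGroup (BSrels m n)

instance (m n : ℤ) : Group (BS m n) :=
  inferInstanceAs (Group (PresentedGroup (BSrels m n)))

/-- The generator `a` of `BS(m,n)`. -/
def BSa (m n : ℤ) : BS m n := PresentedGroup.of false

/-- The generator `t` of `BS(m,n)`. -/
def BSt (m n : ℤ) : BS m n := PresentedGroup.of true

/-- The relations of `H(n,r,s)`: `t⁻¹ a t a⁻ⁿ`, `tʳ`, `aˢ`. -/
def Hrels (n r s : ℤ) : Set (FreeGroup Bool) :=
  {(FreeGroup.of true)⁻¹ * FreeGroup.of false * FreeGroup.of true * (FreeGroup.of false) ^ (-n),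
   (FreeGroup.of true) ^ r, (FreeGroup.of false) ^ s}

/-- The group `H(n,r,s) = ⟨a, t ∣ t⁻¹ a t = aⁿ, tʳ = 1, aˢ = 1⟩`. -/
def Hgrp (n r s : ℤ) : Type := PresentedGroup (Hrels n r s)

instance (n r s : ℤ) : Group (Hgrp n r s) :=
  inferInstanceAs (Group (PresentedGroup (Hrels n r s)))

/-- The generator `a` of `H(n,r,s)`. -/
def Ha (n r s : ℤ) : Hgrp n r s := PresentedGroup.of false

/-- The generator `t` of `H(n,r,s)`. -/
def Ht (n r s : ℤ) : Hgrp n r s := PresentedGroup.of true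

/-- A class of groups: a predicate on (Type-0) groups. -/
def GroupClass : Type 1 := ∀ (G : Type) [Group G], Prop

/-- A class of groups consists only of periodic (torsion) groups. -/
def PeriodicClass (C : GroupClass) : Prop :=
  ∀ (G : Type) [Group G], C G → ∀ g : G, IsOfFinOrder g

/-- `C` is a root class: closed under isomorphism, contains a non-trivial group, closed under
subgroups, extensions and unrestricted direct products `∏_{y ∈ Y} X` with `X, Y ∈ C`. -/
structure IsRootClass (C : GroupClass) : Prop where
  iso_closed : ∀ (G H : Type) [Group G] [Group H], (G ≃* H) → C G → C H
  has_nontrivial : ∃ (G : Type) (_ : Group G), C G ∧ Nontrivial G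
  subgroup_closed : ∀ (G : Type) [Group G] (H : Subgroup G), C G → C H
  extension_closed : ∀ (G : Type) [Group G] (N : Subgroup G) [N.Normal],
    C N → C (G ⧸ N) → C G
  pi_closed : ∀ (X Y : Type) [Group X] [Group Y], C X → C Y → C (Y → X)

/-- `𝔓(C)`: the set of primes dividing the order of some element of some group in `C`. -/
def PrimesOf (C : GroupClass) : Set ℕ :=
  {p | p.Prime ∧ ∃ (G : Type) (_ : Group G), C G ∧ ∃ g : G, p ∣ orderOf g}

/-- A natural number is a `P`-number: all its prime divisors lie in `P`. -/
def IsPNat (P : Set ℕ) (k : ℕ) : Prop := ∀ p : ℕ, p.Prime → p ∣ k → p ∈ P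

/-- An integer is a `P`-number: all its prime divisors lie in `P`. -/
def IsPInt (P : Set ℕ) (k : ℤ) : Prop := ∀ p : ℕ, p.Prime → (p : ℤ) ∣ k → p ∈ P

/-- The class `𝓕_P` of finite groups whose order is a `P`-number. -/
def FClass (P : Set ℕ) (G : Type) [Group G] : Prop :=
  Finite G ∧ IsPNat P (Nat.card G)

/-- The class `𝓕𝓢_P` of finite solvable groups whose order is a `P`-number. -/
def FSClass (P : Set ℕ) (G : Type) [Group G] : Prop :=
  Finite G ∧ IsSolvable G ∧ IsPNat P (Nat.card G)

/-- `X` is conjugacy `C`-separable. -/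
def ConjSep (C : GroupClass) (X : Type) [Group X] : Prop :=
  ∀ x y : X, ¬IsConj x y →
    ∃ (G : Type) (_ : Group G), C G ∧
      ∃ σ : X →* G, Function.Surjective σ ∧ ¬IsConj (σ x) (σ y)

/-- `X` is residually a `C`-group. -/
def ResiduallyIn (C : GroupClass) (X : Type) [Group X] : Prop :=
  ∀ x y : X, x ≠ y →
    ∃ (G : Type) (_ : Group G), C G ∧
      ∃ σ : X →* G, Function.Surjective σ ∧ σ x ≠ σ y

/-- `X` is residually finite. -/
def ResiduallyFinite (X : Type) [Group X] : Prop :=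
  ∀ x y : X, x ≠ y →
    ∃ (G : Type) (_ : Group G), Finite G ∧
      ∃ σ : X →* G, Function.Surjective σ ∧ σ x ≠ σ y

/-- `X` is conjugacy (finite) separable. -/
def ConjugacySeparable (X : Type) [Group X] : Prop :=
  ∀ x y : X, ¬IsConj x y →
    ∃ (G : Type) (_ : Group G), Finite G ∧
      ∃ σ : X →* G, Function.Surjective σ ∧ ¬IsConj (σ x) (σ y)

/-- `Ξ(n,P)`: positive `P`-numbers `s` such that `n ^ r ≡ 1 (mod s)` for some positive
`P`-number `r`. -/
def Xi (n : ℤ) (P : Set ℕ) : Set ℤ :=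
  {s | 0 < s ∧ IsPInt P s ∧ ∃ r : ℤ, 0 < r ∧ IsPInt P r ∧ n ^ r.toNat ≡ 1 [ZMOD s]}

/-- `Ω(n,P)`: pairs `(r,s)` of positive `P`-numbers with `n ^ r ≡ 1 (mod s)`. -/
def OmegaP (n : ℤ) (P : Set ℕ) : Set (ℤ × ℤ) :=
  {rs | 0 < rs.1 ∧ 0 < rs.2 ∧ IsPInt P rs.1 ∧ IsPInt P rs.2 ∧
    n ^ rs.1.toNat ≡ 1 [ZMOD rs.2]}

/-- if `|n ^ (p²) - 1| ∈ Ξ(n,𝔓)` with `|n| ≥ 2` and `p` prime, then `p ∈ 𝔓`. -/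
theorem stmt18 (n : ℤ) (hn : 2 ≤ |n|) (p : ℕ) (hp : p.Prime) (P : Set ℕ)
    (hP : P.Nonempty) (hPprime : ∀ q ∈ P, q.Prime)
    (h : |n ^ (p ^ 2) - 1| ∈ Xi n P) : p ∈ P := by
  simp only [Xi, IsPInt, Set.mem_setOf_eq] at h
  obtain ⟨hs0, hsP, r, hr0, hrP, hmod⟩ := h
  set s : ℤ := |n ^ (p ^ 2) - 1| with hs
  have hp2 : 2 ≤ p := hp.two_le
  have habs : (2:ℤ) ≤ |n| := hn
  have hdvd1 : s ∣ n ^ (p ^ 2) - 1 := (abs_dvd _ _).mpr dvd_rfl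
  have hdvd2 : s ∣ n ^ r.toNat - 1 := (Int.ModEq.dvd hmod.symm)
  set m : ℕ := s.toNat with hmdef
  have hm : (m : ℤ) = s := Int.toNat_of_nonneg hs0.le
  have hm0 : m ≠ 0 := by
    intro h0; rw [h0] at hm; simp at hm; omega
  haveI : NeZero m := ⟨hm0⟩
  have key : ∀ k : ℕ, s ∣ n ^ k - 1 ↔ ((n : ZMod m)) ^ k = 1 := by
    intro k
    rw [← hm, ← ZMod.intCast_zmod_eq_zero_iff_dvd]
    push_cast
    rw [sub_eq_zero]
  set x : ZMod m := (n : ZMod m) with hx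
  have hx1 : x ^ (p ^ 2) = 1 := (key _).mp hdvd1
  have hx2 : x ^ r.toNat = 1 := (key _).mp hdvd2
  have hd1 : orderOf x ∣ p ^ 2 := orderOf_dvd_of_pow_eq_one hx1
  have hd2 : orderOf x ∣ r.toNat := orderOf_dvd_of_pow_eq_one hx2
  have hord : orderOf x = p ^ 2 := by
    by_contra hne
    obtain ⟨i, hi, hdi⟩ := (Nat.dvd_prime_pow hp).mp hd1
    have hile : i ≤ 1 := by
      rcases Nat.lt_or_ge i 2 with h' | h'
      · omega
      · exfalso; apply hne; rw [hdi]; congr 1; omega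
    have hdle : orderOf x ≤ p := by
      rw [hdi]
      calc p ^ i ≤ p ^ 1 := Nat.pow_le_pow_right hp.pos hile
        _ = p := pow_one p
    have hdpos : 0 < orderOf x :=
      (isOfFinOrder_iff_pow_eq_one.mpr ⟨p ^ 2, by positivity, hx1⟩).orderOf_pos
    set d := orderOf x with hdd
    have hsd : s ∣ n ^ d - 1 := (key d).mpr (pow_orderOf_eq_one x)
    have hnd : n ^ d - 1 ≠ 0 := by
      intro h0
      have : |n ^ d| = 1 := by rw [sub_eq_zero] at h0; rw [h0]; simp
      rw [abs_pow] at this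
      have : (2:ℤ) ^ d ≤ 1 := this ▸ pow_le_pow_left₀ (by norm_num) habs d
      have : (2:ℤ) ^ 1 ≤ 2 ^ d := pow_le_pow_right₀ (by norm_num) hdpos
      omega
    have hle : s ≤ |n ^ d - 1| := Int.le_of_dvd (abs_pos.mpr hnd) ((dvd_abs _ _).mpr hsd)
    have b1 : |n ^ d - 1| ≤ |n| ^ d + 1 := by
      calc |n ^ d - 1| ≤ |n ^ d| + |(1:ℤ)| := abs_sub _ _
        _ = |n| ^ d + 1 := by rw [abs_pow]; norm_num
    have b2 : |n| ^ d ≤ |n| ^ p := pow_le_pow_right₀ (by omega) hdle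
    have b3 : |n| ^ (p ^ 2) - 1 ≤ s := by
      rw [hs, ← abs_pow]
      have := abs_sub_abs_le_abs_sub (n ^ (p ^ 2)) 1
      simp at this ⊢
      linarith [this]
    have b4 : 2 * |n| ^ p ≤ |n| ^ (p ^ 2) := by
      calc 2 * |n| ^ p ≤ |n| * |n| ^ p := by
            apply mul_le_mul_of_nonneg_right habs (by positivity)
        _ = |n| ^ (p + 1) := by ring
        _ ≤ |n| ^ (p ^ 2) := by
            apply pow_le_pow_right₀ (by omega)
            rw [pow_two]; nlinarith
    have b5 : (4:ℤ) ≤ |n| ^ p := by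
      calc (4:ℤ) = 2 ^ 2 := by norm_num
        _ ≤ 2 ^ p := pow_le_pow_right₀ (by norm_num) hp2
        _ ≤ |n| ^ p := pow_le_pow_left₀ (by norm_num) habs p
    linarith
  have hpr : (p : ℤ) ∣ r := by
    have h1 : p ∣ r.toNat := dvd_trans (dvd_pow_self p (by norm_num)) (hord ▸ hd2)
    have := Int.natCast_dvd_natCast.mpr h1
    rwa [Int.toNat_of_nonneg hr0.le] at this
  exact hrP p hp hpr
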